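/- Let G be a finite simple graph with at least one edge. Then lim_{n→∞} emb(n,G)/n = 1/χ_f(G), where χ_f(G) = inf{ a/b : a, b positive integers such that there exists a graph homomorphism from G to the Kneser graph Kn(a,b) }. -/

import Mathlib

open Finset

/-- The Kneser cube: the simple graph on all subsets of `[n]`, with two distinct
sets adjacent iff they are disjoint. -/
def kneserCube (n : ℕ) : SimpleGraph (Finset (Fin n)) where
  Adj A B := A ≠ B ∧ Disjoint A B
  symm := ⟨fun _ _ h => ⟨h.1.symm, h.2.symm⟩⟩
  loopless := ⟨fun _ h => h.1 rfl⟩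

/-- The Kneser graph `Kn(n, m)`: the simple graph on all `m`-element subsets of `[n]`,
with two distinct sets adjacent iff they are disjoint. -/
def kneserGraph (n m : ℕ) : SimpleGraph {A : Finset (Fin n) // A.card = m} where
  Adj A B := A ≠ B ∧ Disjoint A.1 B.1
  symm := ⟨fun _ _ h => ⟨h.1.symm, h.2.symm⟩⟩
  loopless := ⟨fun _ h => h.1 rfl⟩

/-- `H` contains a subgraph isomorphic to `G`, i.e. there is an injective graph
homomorphism from `G` into `H`. -/
def hasCopy {V W : Type*} (G : SimpleGraph V) (H : SimpleGraph W) : Prop :=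
  ∃ f : V → W, Function.Injective f ∧ ∀ a b, G.Adj a b → H.Adj (f a) (f b)

/-- A family `F` of subsets of `[n]` is `G`-free if the subgraph of the Kneser cube
induced on `F` contains no subgraph isomorphic to `G`. -/
def gFree {V : Type*} (G : SimpleGraph V) (n : ℕ) (F : Finset (Finset (Fin n))) : Prop :=
  ¬ ∃ f : V → Finset (Fin n),
      Function.Injective f ∧ (∀ v, f v ∈ F) ∧
        ∀ a b, G.Adj a b → (kneserCube n).Adj (f a) (f b)

/-- `vexG n G` : the maximum size of a `G`-free family of subsets of `[n]`. -/
noncomputable def vexG {V : Type*} (n : ℕ) (G : SimpleGraph V) : ℕ :=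
  sSup {k | ∃ F : Finset (Finset (Fin n)), gFree G n F ∧ F.card = k}

/-- `emb n G` : the maximum `m` such that the Kneser graph `Kn(n, m)` contains a
subgraph isomorphic to `G`. -/
noncomputable def emb {V : Type*} (n : ℕ) (G : SimpleGraph V) : ℕ :=
  sSup {m | hasCopy G (kneserGraph n m)}

set_option linter.unusedSectionVars false


lemma enc_inj {s : ℕ} (hs : 0 < s) {i1 i2 r1 r2 : ℕ} (h1 : r1 < s) (h2 : r2 < s)
    (h : r1 + i1 * s = r2 + i2 * s) : r1 = r2 ∧ i1 = i2 := by
  have hr : r1 = r2 := by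
    have := congrArg (· % s) h
    simpa [Nat.add_mul_mod_self_right, Nat.mod_eq_of_lt h1, Nat.mod_eq_of_lt h2] using this
  refine ⟨hr, ?_⟩
  subst hr
  have : i1 * s = i2 * s := by omega
  exact Nat.eq_of_mul_eq_mul_right hs this

lemma construction {V : Type*} [Fintype V] (G : SimpleGraph V)
    {a b : ℕ} (hb : 0 < b)
    (h : V → {A : Finset (Fin a) // A.card = b})
    (hh : ∀ u v, G.Adj u v → (kneserGraph a b).Adj (h u) (h v))
    {t n : ℕ} (ht : 0 < t) (hn : a * (t + Fintype.card V) ≤ n) :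
    hasCopy G (kneserGraph n (b * t)) := by
  classical
  set k := Fintype.card V with hk
  set s := t + k with hs
  have hs0 : 0 < s := by omega
  let e : V ≃ Fin k := Fintype.equivFin V
  -- the t-subset of [s] coding index j
  let N : Fin k → Finset ℕ := fun j => insert (t - 1 + j.val) (Finset.range (t - 1))
  have hNmem : ∀ j : Fin k, ∀ r ∈ N j, r < s := by
    intro j r hr
    rcases Finset.mem_insert.mp hr with h' | h'
    · have := j.isLt; omega
    · have := Finset.mem_range.mp h'; omega
  have hNcard : ∀ j : Fin k, (N j).card = t := by
    intro j
    have : (t - 1 + j.val) ∉ Finset.range (t - 1) := by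
      simp only [Finset.mem_range]; omega
    rw [Finset.card_insert_of_notMem this, Finset.card_range]; omega
  have hNinj : ∀ j j' : Fin k, (t - 1 + j.val) ∈ N j' → j = j' := by
    intro j j' hmem
    rcases Finset.mem_insert.mp hmem with h' | h'
    · ext; omega
    · have := Finset.mem_range.mp h'; omega
  -- encoding
  let A0 : V → Finset ℕ := fun v => ((h v).1 ×ˢ N (e v)).image (fun p => p.2 + p.1.val * s)
  have hmemA0 : ∀ v x, x ∈ A0 v ↔ ∃ i : Fin a, ∃ r : ℕ, i ∈ (h v).1 ∧ r ∈ N (e v) ∧ x = r + i.val * s := by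
    intro v x
    simp only [A0, Finset.mem_image, Finset.mem_product, Prod.exists]
    constructor
    · rintro ⟨i, r, ⟨hi, hr⟩, rfl⟩; exact ⟨i, r, hi, hr, rfl⟩
    · rintro ⟨i, r, hi, hr, rfl⟩; exact ⟨i, r, ⟨hi, hr⟩, rfl⟩
  have hbound : ∀ v, ∀ x ∈ A0 v, x < n := by
    intro v x hx
    obtain ⟨i, r, _, hr, rfl⟩ := (hmemA0 v x).mp hx
    have h1 : r < s := hNmem _ _ hr
    have h2 : i.val + 1 ≤ a := i.isLt
    calc r + i.val * s < s + i.val * s := by omega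
    _ = (i.val + 1) * s := by ring
    _ ≤ a * s := Nat.mul_le_mul_right s h2
    _ ≤ n := by rw [hs]; exact hn
  have hcardA0 : ∀ v, (A0 v).card = b * t := by
    intro v
    rw [Finset.card_image_of_injOn, Finset.card_product, (h v).2, hNcard]
    rintro ⟨i1, r1⟩ hp1 ⟨i2, r2⟩ hp2 heq
    simp only [Finset.mem_coe, Finset.mem_product] at hp1 hp2
    obtain ⟨hre, hie⟩ := enc_inj hs0 (hNmem _ _ hp1.2) (hNmem _ _ hp2.2) heq
    exact Prod.ext (Fin.ext hie) hre
  let F : V → Finset (Fin n) := fun v => (A0 v).attachFin (hbound v)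
  refine ⟨fun v => ⟨F v, by rw [Finset.card_attachFin, hcardA0]⟩, ?_, ?_⟩
  · -- injective
    intro u v huv
    have himg : ∀ w, A0 w = (F w).image (Fin.val) := by
      intro w
      ext x
      simp only [Finset.mem_image, F, Finset.mem_attachFin]
      constructor
      · intro hx; exact ⟨⟨x, hbound w x hx⟩, hx, rfl⟩
      · rintro ⟨z, hz, rfl⟩; exact hz
    have hFA : A0 u = A0 v := by
      rw [himg u, himg v, show F u = F v from congrArg Subtype.val huv]
    -- pick an element of (h u).1
    have hne : (h u).1.Nonempty := Finset.card_pos.mp (by rw [(h u).2]; exact hb)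
    obtain ⟨i0, hi0⟩ := hne
    have hx : (t - 1 + (e u).val) + i0.val * s ∈ A0 u :=
      (hmemA0 u _).mpr ⟨i0, _, hi0, Finset.mem_insert_self _ _, rfl⟩
    rw [hFA] at hx
    obtain ⟨i', r', _, hr', hxeq⟩ := (hmemA0 v _).mp hx
    have h1 : t - 1 + (e u).val < s := by have := (e u).isLt; omega
    obtain ⟨hre, _⟩ := enc_inj hs0 h1 (hNmem _ _ hr') hxeq
    have : e u = e v := hNinj (e u) (e v) (hre ▸ hr')
    exact e.injective this
  · -- adjacency
    intro u v huv
    have hdisA : Disjoint (A0 u) (A0 v) := by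
      rw [Finset.disjoint_left]
      intro x hxu hxv
      obtain ⟨i1, r1, hi1, hr1, rfl⟩ := (hmemA0 u x).mp hxu
      obtain ⟨i2, r2, hi2, hr2, hxeq⟩ := (hmemA0 v _).mp hxv
      obtain ⟨_, hie⟩ := enc_inj hs0 (hNmem _ _ hr1) (hNmem _ _ hr2) hxeq
      have hdis := (hh u v huv : (h u) ≠ (h v) ∧ Disjoint (h u).1 (h v).1).2
      exact Finset.disjoint_left.mp hdis hi1 (by rwa [show i1 = i2 from Fin.ext hie])
    have hdisF : Disjoint (F u) (F v) := by
      rw [Finset.disjoint_left]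
      intro z hzu hzv
      rw [Finset.mem_attachFin] at hzu hzv
      exact Finset.disjoint_left.mp hdisA hzu hzv
    refine And.intro ?_ hdisF
    intro heq
    have hFeq : F u = F v := congrArg Subtype.val heq
    have hFuNe : (F u).Nonempty := by
      rw [← Finset.card_pos, Finset.card_attachFin, hcardA0]
      exact Nat.mul_pos hb ht
    obtain ⟨z, hz⟩ := hFuNe
    exact Finset.disjoint_left.mp hdisF hz (hFeq ▸ hz)

section main

variable {V : Type*} [Fintype V] (G : SimpleGraph V)

/-- the set defining the fractional chromatic number -/
def chrSet (G : SimpleGraph V) : Set ℝ :=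
  {x : ℝ | ∃ a b : ℕ, 0 < a ∧ 0 < b ∧
    (∃ h : V → {A : Finset (Fin a) // A.card = b},
      ∀ u v, G.Adj u v → (kneserGraph a b).Adj (h u) (h v)) ∧
    x = (a : ℝ) / (b : ℝ)}

lemma chrSet_nonempty (hedge : ∃ a b, G.Adj a b) : (chrSet G).Nonempty := by
  classical
  obtain ⟨u0, v0, huv⟩ := hedge
  have : Nonempty V := ⟨u0⟩
  set k := Fintype.card V with hk
  have hk0 : 0 < k := Fintype.card_pos
  let e : V ≃ Fin k := Fintype.equivFin V
  refine ⟨(k : ℝ) / 1, k, 1, hk0, one_pos, ⟨fun v => ⟨{e v}, Finset.card_singleton _⟩, ?_⟩, by norm_num⟩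
  intro u v huv'
  have hne : e u ≠ e v := fun h' => (huv'.ne (e.injective h')).elim
  refine And.intro ?_ ?_
  · intro h'
    apply hne
    have := congrArg Subtype.val h'
    simpa using this
  · rw [Finset.disjoint_singleton]
    exact hne

lemma chrSet_ge_two (hedge : ∃ a b, G.Adj a b) : ∀ x ∈ chrSet G, (2 : ℝ) ≤ x := by
  rintro x ⟨a, b, ha, hb, ⟨h, hh⟩, rfl⟩
  obtain ⟨u, v, huv⟩ := hedge
  have hdis := (hh u v huv : (h u) ≠ (h v) ∧ Disjoint (h u).1 (h v).1).2
  have hcard : 2 * b ≤ a := by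
    have := Finset.card_union_of_disjoint hdis
    have hle : ((h u).1 ∪ (h v).1).card ≤ a := by
      have := Finset.card_le_card (Finset.subset_univ ((h u).1 ∪ (h v).1))
      simpa using this
    rw [this, (h u).2, (h v).2] at hle
    omega
  have hb' : (0 : ℝ) < b := by exact_mod_cast hb
  rw [le_div_iff₀ hb']
  have : (2 * b : ℕ) ≤ (a : ℕ) := hcard
  exact_mod_cast this

lemma embSet_bddAbove (hedge : ∃ a b, G.Adj a b) (n : ℕ) :
    ∀ m ∈ {m | hasCopy G (kneserGraph n m)}, 2 * m ≤ n := by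
  rintro m ⟨f, hfinj, hf⟩
  obtain ⟨u, v, huv⟩ := hedge
  have hdis := (hf u v huv : (f u) ≠ (f v) ∧ Disjoint (f u).1 (f v).1).2
  have := Finset.card_union_of_disjoint hdis
  have hle : ((f u).1 ∪ (f v).1).card ≤ n := by
    have := Finset.card_le_card (Finset.subset_univ ((f u).1 ∪ (f v).1))
    simpa using this
  rw [this, (f u).2, (f v).2] at hle
  omega

lemma emb_upper (hedge : ∃ a b, G.Adj a b) (n : ℕ) (hn : 0 < n) :
    (emb n G : ℝ) / n ≤ 1 / sInf (chrSet G) := by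
  have hL2 : (2 : ℝ) ≤ sInf (chrSet G) :=
    le_csInf (chrSet_nonempty G hedge) (chrSet_ge_two G hedge)
  have hL0 : (0 : ℝ) < sInf (chrSet G) := lt_of_lt_of_le two_pos hL2
  set T := {m | hasCopy G (kneserGraph n m)} with hT
  by_cases hTne : T.Nonempty
  · have hbdd : BddAbove T := ⟨n, fun m hm => by have := embSet_bddAbove G hedge n m hm; omega⟩
    have hmem : sSup T ∈ T := Nat.sSup_mem hTne hbdd
    set m := sSup T with hm
    by_cases hm0 : m = 0
    · rw [show emb n G = m from rfl, hm0]
      simp only [Nat.cast_zero, zero_div]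
      positivity
    · have hm1 : 0 < m := Nat.pos_of_ne_zero hm0
      obtain ⟨f, _, hf⟩ := hmem
      have hmemS : (n : ℝ) / m ∈ chrSet G := ⟨n, m, hn, hm1, ⟨f, hf⟩, rfl⟩
      have hLle : sInf (chrSet G) ≤ (n : ℝ) / m :=
        csInf_le ⟨2, chrSet_ge_two G hedge⟩ hmemS
      rw [div_le_div_iff₀ (by exact_mod_cast hn) hL0, one_mul]
      have hm' : (0 : ℝ) < m := by exact_mod_cast hm1
      calc (emb n G : ℝ) * sInf (chrSet G) = (m : ℝ) * sInf (chrSet G) := rfl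
        _ ≤ (m : ℝ) * ((n : ℝ) / m) := by
            exact mul_le_mul_of_nonneg_left hLle (le_of_lt hm')
        _ = n := by field_simp
  · have : T = ∅ := Set.not_nonempty_iff_eq_empty.mp hTne
    have : emb n G = 0 := by
      rw [show emb n G = sSup T from rfl, this]
      simp
    rw [this]
    simp only [Nat.cast_zero, zero_div]
    positivity

theorem stmt19' (hedge : ∃ a b, G.Adj a b) :
    Filter.Tendsto (fun n : ℕ => (emb n G : ℝ) / (n : ℝ)) Filter.atTop
      (nhds (1 / sInf (chrSet G))) := by
  classical
  set L := sInf (chrSet G) with hLdef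
  have hSne := chrSet_nonempty G hedge
  have hL2 : (2 : ℝ) ≤ L := le_csInf hSne (chrSet_ge_two G hedge)
  have hL0 : (0 : ℝ) < L := lt_of_lt_of_le two_pos hL2
  rw [Metric.tendsto_atTop]
  intro ε hε
  -- pick a,b close to the infimum
  obtain ⟨x, hxS, hxlt⟩ := Real.lt_sInf_add_pos hSne hε
  obtain ⟨a, b, ha, hb, ⟨h, hh⟩, rfl⟩ := hxS
  set k := Fintype.card V with hk
  have ha' : (0 : ℝ) < a := by exact_mod_cast ha
  have hb' : (0 : ℝ) < b := by exact_mod_cast hb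
  have hxL : L ≤ (a : ℝ) / b := csInf_le ⟨2, chrSet_ge_two G hedge⟩ ⟨a, b, ha, hb, ⟨h, hh⟩, rfl⟩
  have hab0 : (0 : ℝ) < (a : ℝ) / b := div_pos ha' hb'
  -- 1/L - b/a ≤ ε/4
  have hquarter : 1 / L - (b : ℝ) / a < ε / 4 := by
    have h1 : (b : ℝ) / a = 1 / ((a : ℝ) / b) := by field_simp
    rw [h1]
    have h2 : 1 / L - 1 / ((a:ℝ)/b) = ((a:ℝ)/b - L) / (L * ((a:ℝ)/b)) := by
      field_simp
    rw [h2]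
    have hnum : (a:ℝ)/b - L < ε := by linarith
    have hden : (4 : ℝ) ≤ L * ((a:ℝ)/b) := by
      have : (2:ℝ) ≤ (a:ℝ)/b := le_trans hL2 hxL
      nlinarith
    have hnn : (0:ℝ) ≤ (a:ℝ)/b - L := by linarith
    have hnum' : (a:ℝ)/b - L < ε := by linarith
    have hstep : ((a:ℝ)/b - L) / (L * ((a:ℝ)/b)) ≤ ((a:ℝ)/b - L) / 4 :=
      div_le_div_of_nonneg_left hnn (by norm_num) hden
    calc ((a:ℝ)/b - L) / (L * ((a:ℝ)/b)) ≤ ((a:ℝ)/b - L) / 4 := hstep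
      _ < ε / 4 := by linarith
  -- choose N large enough
  obtain ⟨N2, hN2⟩ := exists_nat_gt (4 * ((b:ℝ) * (k + 1)) / ε)
  refine ⟨max (a * (k + 1)) (N2 + 1), fun n hn => ?_⟩
  have hn1 : a * (k + 1) ≤ n := le_trans (le_max_left _ _) hn
  have hn2 : N2 + 1 ≤ n := le_trans (le_max_right _ _) hn
  have hnpos : 0 < n := lt_of_lt_of_le (Nat.mul_pos ha (by omega)) hn1
  have hn0 : (0 : ℝ) < n := by exact_mod_cast hnpos
  -- nat arithmetic
  have hdiv : k + 1 ≤ n / a := (Nat.le_div_iff_mul_le ha).mpr (by rw [mul_comm]; exact hn1)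
  set t := n / a - k with htdef
  have ht : 0 < t := by omega
  have htk : t + k = n / a := by omega
  have hnle : a * (t + k) ≤ n := by
    rw [htk, mul_comm]
    exact Nat.div_mul_le_self n a
  have hcopy : hasCopy G (kneserGraph n (b * t)) := construction G hb h hh ht hnle
  have hbdd : BddAbove {m | hasCopy G (kneserGraph n m)} :=
    ⟨n, fun m hm => by have := embSet_bddAbove G hedge n m hm; omega⟩
  have hemb : b * t ≤ emb n G := le_csSup hbdd hcopy
  -- real estimates
  set c : ℝ := 1 / L with hcdef
  set dn : ℝ := ((n / a : ℕ) : ℝ) with hdndef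
  have hdn : (n : ℝ) < (a : ℝ) * dn + a := by
    have h1 : n < a * (n / a) + a := by
      have := Nat.div_add_mod n a
      have := Nat.mod_lt n ha
      omega
    rw [hdndef]
    exact_mod_cast h1
  have htR : (t : ℝ) = dn - k := by
    rw [hdndef, htdef, Nat.cast_sub (by omega)]
  have h2 : (c - ε/4) * a < (b : ℝ) := by
    have hba : c - ε/4 < (b : ℝ) / a := by
      have : c - (b:ℝ)/a < ε/4 := hquarter
      linarith
    exact (lt_div_iff₀ ha').mp hba
  have h3 : (b : ℝ) * (k + 1) < ε/4 * n := by
    have hn2' : (4 * ((b:ℝ) * (k + 1)) / ε) < n := by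
      have : (N2 : ℝ) < n := by exact_mod_cast (by omega : N2 < n)
      linarith
    rw [div_lt_iff₀ hε] at hn2'
    linarith
  have h1' : (n : ℝ) - a < a * dn := by linarith
  have key2 : (a : ℝ) * ((c - ε/2) * n) < a * ((b : ℝ) * t) := by
    have hint1 : (b:ℝ) * ((n:ℝ) - a) < (b:ℝ) * (a * dn) := by
      exact mul_lt_mul_of_pos_left h1' hb'
    have hint2 : (c - ε/4) * a * n < (b:ℝ) * n := mul_lt_mul_of_pos_right h2 hn0
    have hint3 : (a:ℝ) * ((b:ℝ) * (k+1)) < (a:ℝ) * (ε/4 * n) :=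
      mul_lt_mul_of_pos_left h3 ha'
    rw [htR]
    nlinarith [hint1, hint2, hint3]
  have key : (c - ε/2) * n < (b : ℝ) * t := (mul_lt_mul_iff_right₀ ha').mp key2
  have hlow : c - ε/2 < (emb n G : ℝ) / n := by
    have hbt : (b : ℝ) * t ≤ (emb n G : ℝ) := by exact_mod_cast hemb
    rw [lt_div_iff₀ hn0]
    linarith
  have hup : (emb n G : ℝ) / n ≤ c := emb_upper G hedge n hnpos
  rw [Real.dist_eq, abs_sub_lt_iff]
  constructor
  · linarith
  · linarith

end main

/-- for a finite simple graph `G` with at least one edge,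
`lim_{n→∞} emb(n,G)/n = 1/χ_f(G)`, where
`χ_f(G) = inf { a/b : a, b ≥ 1 and there is a graph homomorphism G → Kn(a,b) }`. -/
theorem stmt19 {V : Type*} [Fintype V] (G : SimpleGraph V)
    (hedge : ∃ a b, G.Adj a b) :
    Filter.Tendsto (fun n : ℕ => (emb n G : ℝ) / (n : ℝ)) Filter.atTop
      (nhds (1 / sInf {x : ℝ | ∃ a b : ℕ, 0 < a ∧ 0 < b ∧
        (∃ h : V → {A : Finset (Fin a) // A.card = b},
          ∀ u v, G.Adj u v → (kneserGraph a b).Adj (h u) (h v)) ∧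
        x = (a : ℝ) / (b : ℝ)})) := stmt19' G hedge
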